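/- Let (p_i)_{i≥1} be a sequence of positive integers with p_{i+1} > 2(p_1 + ⋯ + p_i) for all i, and let P = (p_1,p_2,…). Set B_1 = SG_1((p_1,p_3,p_5,…)), B_2 = SG_1((p_2,p_4,p_6,…)), and B_0 = SG_2(P) ∖ (B_1 ∪ B_2). Then for each i ∈ {0,1,2} there do not exist integers a_1 ≤ a_2 ≤ a_3 with {a_1, a_2, a_3, a_1+a_2, a_2+a_3, a_1+a_3} ⊆ B_i; consequently no B_i contains an SG_2-set, and the family F_{SG_2} does not have the Ramsey property (i.e. there is A ∈ F_{SG_2} and a decomposition A = A_1 ∪ A_2 with A_1 ∉ F_{SG_2} and A_2 ∉ F_{SG_2}). -/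

import Mathlib

open scoped Classical
open MeasureTheory Filter Topology

noncomputable section

/-- Integer iterate of a bijection `T` of a set: `zIter T n = T^n`. -/
def zIter {X : Type*} (T : Equiv.Perm X) (n : ℤ) : X → X := ⇑(T ^ n)

/-- Integer iterate of a homeomorphism. -/
def hIter {X : Type*} [TopologicalSpace X] (T : X ≃ₜ X) (n : ℤ) : X → X :=
  zIter T.toEquiv n

/-- The integer nearest to `a`, with ties broken towards the smaller integer.
This is the `⌈·⌉` of the paper. -/
def nearInt (a : ℝ) : ℤ := if a - (⌊a⌋ : ℝ) ≤ 1/2 then ⌊a⌋ else ⌈a⌉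

/-- The distance from `a` to the nearest integer, i.e. `‖a‖` in the paper. -/
def distInt (a : ℝ) : ℝ := |a - (nearInt a : ℝ)|

/-- Generalized polynomials of degree at most `d` (for `d ≥ 1`):
`GP 1` is the smallest collection of functions `ℤ → ℝ` containing `n ↦ a n`
and closed under taking the nearest integer, scalar multiplication and finite sums;
`GP d` moreover contains every `GP e` for `e < d` and all functions
`n ↦ a₀ n^{p₀} ⌈f₁(n)⌉ ⋯ ⌈f k (n)⌉` with `f l ∈ GP (p l)` and `p₀ + ∑ p l = d`. -/
inductive GP : ℕ → (ℤ → ℝ) → Prop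
  | lin (a : ℝ) : GP 1 (fun n => a * n)
  | mono {d : ℕ} (hd : 1 ≤ d) (a₀ : ℝ) (p₀ : ℕ) {k : ℕ} (p : Fin k → ℕ)
      (f : Fin k → ℤ → ℝ) (hf : ∀ l, GP (p l) (f l)) (hsum : p₀ + ∑ l, p l = d) :
      GP d (fun n => a₀ * (n : ℝ) ^ p₀ * ∏ l, (nearInt (f l n) : ℝ))
  | incl {d e : ℕ} (hed : e < d) {f : ℤ → ℝ} (hf : GP e f) : GP d f
  | ceil {d : ℕ} {f : ℤ → ℝ} (hf : GP d f) : GP d (fun n => (nearInt (f n) : ℝ))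
  | smul {d : ℕ} (c : ℝ) {f : ℤ → ℝ} (hf : GP d f) : GP d (fun n => c * f n)
  | add {d : ℕ} {f g : ℤ → ℝ} (hf : GP d f) (hg : GP d g) : GP d (fun n => f n + g n)

/-- The bracket expression `L(a₁, …, a_ℓ) = a₁⌈L(a₂, …, a_ℓ)⌉`, `L(a) = a`. -/
def Lfun : List ℝ → ℝ
  | [] => 0
  | [a] => a
  | a :: b :: rest => a * (nearInt (Lfun (b :: rest)) : ℝ)

/-- Special generalized polynomials of degree at most `d`:
the functions `n ↦ L(n^{j₁} a₁, …, n^{j_ℓ} a_ℓ)` with `1 ≤ ℓ`, `j t ≥ 1`, `∑ j t ≤ d`. -/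
def SGP (d : ℕ) (g : ℤ → ℝ) : Prop :=
  ∃ ℓ : ℕ, 1 ≤ ℓ ∧ ∃ (a : Fin ℓ → ℝ) (j : Fin ℓ → ℕ),
    (∀ t, 1 ≤ j t) ∧ (∑ t, j t) ≤ d ∧
    g = fun n : ℤ => Lfun (List.ofFn fun t => (n : ℝ) ^ (j t) * a t)

/-- `FS({n i}) = {n_{i₁} + ⋯ + n_{i_k} : i₁ < ⋯ < i_k}`, the set of finite sums. -/
def FS {d : ℕ} (n : Fin d → ℤ) : Set ℤ :=
  { m | ∃ I : Finset (Fin d), I.Nonempty ∧ m = ∑ i ∈ I, n i }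

/-- `SG d P`: sums `p_{i₁} + ⋯ + p_{i_k}` over strictly increasing finite index
sequences whose consecutive gaps are at most `d` (infinite sequence `P`). -/
def SG (d : ℕ) (P : ℕ → ℤ) : Set ℤ :=
  { n | ∃ k : ℕ, ∃ i : Fin (k + 1) → ℕ, StrictMono i ∧
      (∀ t : Fin k, i t.succ - i t.castSucc ≤ d) ∧ n = ∑ t, P (i t) }

/-- `SGfin d P` : the same for a finite sequence `P` of length `m`. -/
def SGfin (d : ℕ) {m : ℕ} (P : Fin m → ℤ) : Set ℤ :=
  { n | ∃ k : ℕ, ∃ i : Fin (k + 1) → Fin m, StrictMono i ∧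
      (∀ t : Fin k, (i t.succ : ℕ) - (i t.castSucc : ℕ) ≤ d) ∧ n = ∑ t, P (i t) }

/-- A set of integers is syndetic if it has bounded gaps. -/
def Syndetic (A : Set ℤ) : Prop :=
  ∃ N : ℕ, ∀ i : ℤ, ∃ j, i ≤ j ∧ j ≤ i + N ∧ j ∈ A

/-- `F` has positive upper Banach density. -/
def PosUpperBanachDensity (F : Set ℤ) : Prop :=
  ∃ δ : ℝ, 0 < δ ∧ ∀ N : ℕ, ∃ (a : ℤ) (L : ℕ), N ≤ L ∧ 1 ≤ L ∧
    δ * L ≤ ((Finset.Icc a (a + L - 1)).filter (fun x => x ∈ F)).card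

/-- A set `A ⊆ ℤ` contains finite IP-sets of arbitrarily long lengths. -/
def ContainsArbLongFIP (A : Set ℤ) : Prop :=
  ∀ k : ℕ, 1 ≤ k → ∃ p : Fin k → ℤ, FS p ⊆ A

/-- A topological dynamical system `(X, T)` is minimal: every orbit is dense. -/
def MinimalTDS {X : Type*} [TopologicalSpace X] (T : X ≃ₜ X) : Prop :=
  ∀ x : X, Dense (Set.range fun n : ℤ => hIter T n x)

/-- `Nset T x U = N(x, U) = {n ∈ ℤ : Tⁿ x ∈ U}`. -/
def Nset {X : Type*} [TopologicalSpace X] (T : X ≃ₜ X) (x : X) (U : Set X) : Set ℤ :=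
  { n : ℤ | hIter T n x ∈ U }

/-- The regionally proximal relation of order `d`. -/
def RPd {X : Type*} [MetricSpace X] (T : X ≃ₜ X) (d : ℕ) (x y : X) : Prop :=
  ∀ δ : ℝ, 0 < δ → ∃ (x' y' : X) (n : Fin d → ℤ),
    dist x x' < δ ∧ dist y y' < δ ∧
    ∀ ε : Finset (Fin d), ε.Nonempty →
      dist (hIter T (∑ i ∈ ε, n i) x') (hIter T (∑ i ∈ ε, n i) y') < δ

/-- `S` is a set of `d`-topological recurrence. -/
def TopRecSet (d : ℕ) (S : Set ℤ) : Prop :=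
  ∀ (X : Type) [MetricSpace X] [CompactSpace X] (T : X ≃ₜ X), MinimalTDS T →
    ∀ U : Set X, IsOpen U → U.Nonempty →
      ∃ n ∈ S, (⋂ j ∈ Finset.range (d + 1), hIter T ((j : ℤ) * n) ⁻¹' U).Nonempty

/-- `S` is a set of `d`-recurrence (measurable recurrence). -/
def MeasRecSet (d : ℕ) (S : Set ℤ) : Prop :=
  ∀ (Y : Type) [MeasurableSpace Y] [StandardBorelSpace Y]
    (μ : Measure Y) [IsProbabilityMeasure μ] (T : Y ≃ᵐ Y),
    MeasurePreserving (⇑T) μ μ →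
    ∀ A : Set Y, MeasurableSet A → 0 < μ A →
      ∃ n ∈ S, 0 < μ (⋂ j ∈ Finset.range (d + 1), zIter T.toEquiv ((j : ℤ) * n) ⁻¹' A)

/-- `P` is a Birkhoff recurrence set of order `d`. -/
def BirkhoffRecSet (d : ℕ) (P : Set ℤ) : Prop :=
  ∀ (X : Type) [MetricSpace X] [CompactSpace X] (T : X ≃ₜ X), MinimalTDS T →
    ∀ U : Set X, IsOpen U → U.Nonempty →
      ∃ n : Fin d → ℤ, FS n ⊆ P ∧ (U ∩ ⋂ m ∈ FS n, hIter T m ⁻¹' U).Nonempty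

/-- `F` is a Poincaré recurrence set of order `d`. -/
def PoincareRecSet (d : ℕ) (F : Set ℤ) : Prop :=
  ∀ (Y : Type) [MeasurableSpace Y] [StandardBorelSpace Y]
    (μ : Measure Y) [IsProbabilityMeasure μ] (T : Y ≃ᵐ Y),
    MeasurePreserving (⇑T) μ μ →
    ∀ A : Set Y, MeasurableSet A → 0 < μ A →
      ∃ n : Fin d → ℤ, FS n ⊆ F ∧ 0 < μ (A ∩ ⋂ m ∈ FS n, zIter T.toEquiv m ⁻¹' A)

/-- The upper unitriangular matrix `M(a)` with entries `(M(a))_{i, i+k} = a i k`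
(1-based indexing). -/
def Mmat (d : ℕ) (a : ℕ → ℕ → ℝ) : Matrix (Fin (d + 1)) (Fin (d + 1)) ℝ :=
  fun r c =>
    if (r : ℕ) = (c : ℕ) then 1
    else if (r : ℕ) < (c : ℕ) then a ((r : ℕ) + 1) ((c : ℕ) - (r : ℕ)) else 0

/-- `P_ℓ(a; i, k) = ∑ a_i^{s₁} a_{i+s₁}^{s₂} ⋯`, sum over `(s₁,…,s_ℓ) ∈ {1,…,k}^ℓ`
with `s₁ + ⋯ + s_ℓ = k`. -/
def Ppoly (a : ℕ → ℕ → ℝ) (i k ℓ : ℕ) : ℝ :=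
  ∑ s ∈ Finset.univ.filter (fun s : Fin ℓ → Fin k => (∑ t, ((s t : ℕ) + 1)) = k),
    ∏ t : Fin ℓ,
      a (i + ∑ u ∈ Finset.univ.filter (fun u : Fin ℓ => u < t), ((s u : ℕ) + 1))
        ((s t : ℕ) + 1)

/-- The upper unitriangular matrix with superdiagonal `α₁, …, α_d` (1-based). -/
def Amat (d : ℕ) (α : ℕ → ℝ) : Matrix (Fin (d + 1)) (Fin (d + 1)) ℝ :=
  fun r c =>
    if (r : ℕ) = (c : ℕ) then 1
    else if (c : ℕ) = (r : ℕ) + 1 then α ((r : ℕ) + 1) else 0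

end

namespace SGAux

/-- gap condition on a finite index set -/
def Gapd (d : ℕ) (I : Finset ℕ) : Prop :=
  ∀ a ∈ I, (∃ b ∈ I, a < b) → ∃ c ∈ I, a < c ∧ c ≤ a + d

theorem mem_SG_iff (d : ℕ) (P : ℕ → ℤ) (n : ℤ) :
    n ∈ SG d P ↔ ∃ I : Finset ℕ, I.Nonempty ∧ Gapd d I ∧ n = ∑ j ∈ I, P j := by
  constructor
  · rintro ⟨k, i, hmono, hgap, rfl⟩
    refine ⟨Finset.image i Finset.univ, ⟨i 0, Finset.mem_image_of_mem _ (Finset.mem_univ _)⟩,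
      ?_, ?_⟩
    · rintro a ha ⟨b, hb, hab⟩
      simp only [Finset.mem_image, Finset.mem_univ, true_and] at ha hb
      obtain ⟨t, rfl⟩ := ha
      obtain ⟨s, rfl⟩ := hb
      have hts : t < s := hmono.lt_iff_lt.mp hab
      have htk : (t : ℕ) < k := by
        have := s.isLt; have := Fin.lt_iff_val_lt_val.mp hts; omega
      set t' : Fin k := ⟨(t : ℕ), htk⟩ with ht'
      have hcast : t'.castSucc = t := by ext; simp [ht']
      refine ⟨i t'.succ, Finset.mem_image_of_mem _ (Finset.mem_univ _), ?_, ?_⟩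
      · rw [← hcast]; exact hmono (Fin.castSucc_lt_succ (i := t'))
      · have := hgap t'
        have h2 : i t'.castSucc < i t'.succ := hmono (Fin.castSucc_lt_succ (i := t'))
        rw [hcast] at this h2
        omega
    · exact (Finset.sum_image (fun x _ y _ h => hmono.injective h)).symm
  · rintro ⟨I, hne, hgap, rfl⟩
    have hcard : I.card = (I.card - 1) + 1 := by
      have := Finset.card_pos.mpr hne; omega
    set k := I.card - 1 with hk
    set e := I.orderIsoOfFin hcard with he
    refine ⟨k, fun t => (e t : ℕ), ?_, ?_, ?_⟩
    · intro a b hab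
      exact Subtype.coe_lt_coe.mpr (e.strictMono hab)
    · intro t
      have hmem : ((e t.castSucc : ℕ)) ∈ I := (e t.castSucc).2
      have hlt : (e t.castSucc : ℕ) < (e t.succ : ℕ) :=
        Subtype.coe_lt_coe.mpr (e.strictMono (Fin.castSucc_lt_succ (i := t)))
      obtain ⟨c, hcI, hc1, hc2⟩ := hgap _ hmem ⟨_, (e t.succ).2, hlt⟩
      obtain ⟨s, hs⟩ := e.surjective ⟨c, hcI⟩
      have hcs : (e s : ℕ) = c := by rw [hs]
      have h1 : t.castSucc < s :=
        e.lt_iff_lt.mp (Subtype.coe_lt_coe.mp (by rw [hcs]; exact hc1))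
      have h2 : t.succ ≤ s := by rwa [← Fin.castSucc_lt_iff_succ_le]
      have h3 : (e t.succ : ℕ) ≤ (e s : ℕ) := Subtype.coe_le_coe.mpr (e.le_iff_le.mpr h2)
      show (e t.succ : ℕ) - (e t.castSucc : ℕ) ≤ d
      omega
    · rw [← Finset.sum_coe_sort I P]
      exact (Fintype.sum_equiv e.toEquiv _ _ (fun t => rfl)).symm

theorem straddle {K : Finset ℕ} (hK : Gapd 2 K) {a b m : ℕ} (ha : a ∈ K) (hb : b ∈ K)
    (h1 : a < m) (h2 : m + 1 < b) (hm : m ∉ K) (hm1 : m + 1 ∉ K) : False := by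
  classical
  set F := K.filter (fun x => x < m) with hF
  have haF : a ∈ F := by simp [hF, ha, h1]
  have hFne : F.Nonempty := ⟨a, haF⟩
  set a' := F.max' hFne with ha'
  have ha'F : a' ∈ F := F.max'_mem hFne
  have ha'K : a' ∈ K := (Finset.mem_filter.mp ha'F).1
  have ha'm : a' < m := (Finset.mem_filter.mp ha'F).2
  obtain ⟨c, hcK, hc1, hc2⟩ := hK a' ha'K ⟨b, hb, by omega⟩
  have : ¬ c < m := fun h => by
    have : c ≤ a' := F.le_max' c (by simp [hF, hcK, h])
    omega
  have : c = m ∨ c = m + 1 := by omega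
  rcases this with rfl | rfl
  · exact hm hcK
  · exact hm1 hcK

theorem parity_interval {I : Finset ℕ} (hI : Gapd 2 I) {r : ℕ}
    (hr : ∀ j ∈ I, j % 2 = r) (hne : I.Nonempty) {c : ℕ} (hc : c % 2 = r)
    (h1 : I.min' hne ≤ c) (h2 : c ≤ I.max' hne) : c ∈ I := by
  by_contra hcI
  have hc1I : c + 1 ∉ I := fun h => by have := hr _ h; omega
  have hmin : I.min' hne < c := by
    rcases Nat.lt_or_ge (I.min' hne) c with h | h
    · exact h
    · have : I.min' hne = c := by omega
      exact absurd (this ▸ I.min'_mem hne) hcI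
  have hmaxI : I.max' hne ∈ I := I.max'_mem hne
  have hmax : c + 1 < I.max' hne := by
    have h3 : I.max' hne ≠ c := fun h => hcI (h ▸ hmaxI)
    have h4 : I.max' hne ≠ c + 1 := fun h => hc1I (h ▸ hmaxI)
    omega
  exact straddle hI (I.min'_mem hne) hmaxI hmin hmax hcI hc1I

theorem no_pair_parity {I : Finset ℕ} (hI : Gapd 2 I) (hne : I.Nonempty)
    (hnp : ¬ ∃ m, m ∈ I ∧ m + 1 ∈ I) : ∀ j ∈ I, j % 2 = I.min' hne % 2 := by
  classical
  intro j
  induction j using Nat.strong_induction_on with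
  | _ j ih =>
    intro hj
    rcases eq_or_ne j (I.min' hne) with rfl | hne'
    · rfl
    · have hmin : I.min' hne < j := lt_of_le_of_ne (I.min'_le j hj) (Ne.symm hne')
      set F := I.filter (fun x => x < j) with hF
      have hFne : F.Nonempty := ⟨I.min' hne, by simp [hF, I.min'_mem hne, hmin]⟩
      set a := F.max' hFne with ha
      have haF : a ∈ F := F.max'_mem hFne
      have haI : a ∈ I := (Finset.mem_filter.mp haF).1
      have haj : a < j := (Finset.mem_filter.mp haF).2
      obtain ⟨c, hcI, hc1, hc2⟩ := hI a haI ⟨j, hj, haj⟩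
      have hcj : ¬ c < j := fun h => by
        have : c ≤ a := F.le_max' c (by simp [hF, hcI, h])
        omega
      have hcases : c = j ∨ c = j + 1 := by omega
      rcases hcases with h | h
      · rcases eq_or_ne (a + 1) j with h' | h'
        · exact absurd ⟨a, haI, by rw [h']; exact hj⟩ hnp
        · have := ih a haj haI
          omega
      · exact absurd ⟨j, hj, h ▸ hcI⟩ hnp


variable {p : ℕ → ℤ}

theorem double_lt (hpos : ∀ i, 0 < p i)
    (hgrow : ∀ i, 2 * (∑ j ∈ Finset.range (i + 1), p j) < p (i + 1)) :
    ∀ n, 2 * ∑ j ∈ Finset.range n, p j < p n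
  | 0 => by simpa using hpos 0
  | (m + 1) => hgrow m

theorem erase_bounds (hpos : ∀ i, 0 < p i) {I : Finset ℕ} {n : ℕ}
    (hI : I ⊆ Finset.range (n + 1)) :
    0 ≤ ∑ j ∈ I.erase n, p j ∧ ∑ j ∈ I.erase n, p j ≤ ∑ j ∈ Finset.range n, p j := by
  have hsub : I.erase n ⊆ Finset.range n := by
    intro j hj
    have h1 := Finset.mem_erase.mp hj
    have h2 := Finset.mem_range.mp (hI h1.2)
    simp only [Finset.mem_range]
    omega
  exact ⟨Finset.sum_nonneg fun j _ => (hpos j).le,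
    Finset.sum_le_sum_of_subset_of_nonneg hsub fun j _ _ => (hpos j).le⟩

theorem uniq_aux (hpos : ∀ i, 0 < p i)
    (hgrow : ∀ i, 2 * (∑ j ∈ Finset.range (i + 1), p j) < p (i + 1)) :
    ∀ n (I J K : Finset ℕ), I ⊆ Finset.range n → J ⊆ Finset.range n → K ⊆ Finset.range n →
    ((∑ j ∈ I, p j) + ∑ j ∈ J, p j = ∑ j ∈ K, p j) →
    ∀ j : ℕ, (j ∈ K ↔ j ∈ I ∨ j ∈ J) ∧ ¬(j ∈ I ∧ j ∈ J) := by
  intro n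
  induction n with
  | zero =>
    intro I J K hI hJ hK _ j
    rw [Finset.range_zero, Finset.subset_empty] at hI hJ hK
    subst hI; subst hJ; subst hK
    simp
  | succ n ih =>
    intro I J K hI hJ hK hsum
    classical
    have eI : ∑ j ∈ I, p j = ∑ j ∈ I.erase n, p j + (if n ∈ I then p n else 0) := by
      split_ifs with h
      · rw [Finset.sum_erase_add I _ h]
      · rw [Finset.erase_eq_of_notMem h, add_zero]
    have eJ : ∑ j ∈ J, p j = ∑ j ∈ J.erase n, p j + (if n ∈ J then p n else 0) := by
      split_ifs with h
      · rw [Finset.sum_erase_add J _ h]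
      · rw [Finset.erase_eq_of_notMem h, add_zero]
    have eK : ∑ j ∈ K, p j = ∑ j ∈ K.erase n, p j + (if n ∈ K then p n else 0) := by
      split_ifs with h
      · rw [Finset.sum_erase_add K _ h]
      · rw [Finset.erase_eq_of_notMem h, add_zero]
    have hbI := erase_bounds hpos hI
    have hbJ := erase_bounds hpos hJ
    have hbK := erase_bounds hpos hK
    have hpn := double_lt hpos hgrow n
    have hIe : I.erase n ⊆ Finset.range n := by
      intro j hj
      have h1 := Finset.mem_erase.mp hj
      have h2 := Finset.mem_range.mp (hI h1.2)
      simp only [Finset.mem_range]; omega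
    have hJe : J.erase n ⊆ Finset.range n := by
      intro j hj
      have h1 := Finset.mem_erase.mp hj
      have h2 := Finset.mem_range.mp (hJ h1.2)
      simp only [Finset.mem_range]; omega
    have hKe : K.erase n ⊆ Finset.range n := by
      intro j hj
      have h1 := Finset.mem_erase.mp hj
      have h2 := Finset.mem_range.mp (hK h1.2)
      simp only [Finset.mem_range]; omega
    rw [eI, eJ, eK] at hsum
    by_cases hi : n ∈ I <;> by_cases hj : n ∈ J <;> by_cases hk : n ∈ K <;>
      simp only [hi, hj, hk, if_true, if_false, if_pos, if_neg, not_false_iff, add_zero] at hsum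
    -- cases: (T,T,T) (T,T,F) (T,F,T) (T,F,F) (F,T,T) (F,T,F) (F,F,T) (F,F,F)
    · exfalso; linarith [hbI.1, hbI.2, hbJ.1, hbJ.2, hbK.1, hbK.2, hpos n]
    · exfalso; linarith [hbI.1, hbI.2, hbJ.1, hbJ.2, hbK.1, hbK.2, hpos n]
    · -- n ∈ I, n ∉ J, n ∈ K : good
      have hsum' : (∑ j ∈ I.erase n, p j) + ∑ j ∈ J.erase n, p j = ∑ j ∈ K.erase n, p j := by
        linarith
      have key := ih (I.erase n) (J.erase n) (K.erase n) hIe hJe hKe hsum'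
      intro j
      by_cases hjn : j = n
      · subst hjn; simp [hi, hj, hk]
      · have h := key j
        simp only [Finset.mem_erase, hjn, ne_eq, not_false_iff, true_and] at h
        exact h
    · exfalso; linarith [hbI.1, hbI.2, hbJ.1, hbJ.2, hbK.1, hbK.2, hpos n]
    · -- n ∉ I, n ∈ J, n ∈ K : good
      have hsum' : (∑ j ∈ I.erase n, p j) + ∑ j ∈ J.erase n, p j = ∑ j ∈ K.erase n, p j := by
        linarith
      have key := ih (I.erase n) (J.erase n) (K.erase n) hIe hJe hKe hsum'
      intro j
      by_cases hjn : j = n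
      · subst hjn; simp [hi, hj, hk]
      · have h := key j
        simp only [Finset.mem_erase, hjn, ne_eq, not_false_iff, true_and] at h
        exact h
    · exfalso; linarith [hbI.1, hbI.2, hbJ.1, hbJ.2, hbK.1, hbK.2, hpos n]
    · exfalso; linarith [hbI.1, hbI.2, hbJ.1, hbJ.2, hbK.1, hbK.2, hpos n]
    · -- all out : good
      have key := ih (I.erase n) (J.erase n) (K.erase n) hIe hJe hKe hsum
      intro j
      by_cases hjn : j = n
      · subst hjn; simp [hi, hj, hk]
      · have h := key j
        simp only [Finset.mem_erase, hjn, ne_eq, not_false_iff, true_and] at h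
        exact h

theorem uniq (hpos : ∀ i, 0 < p i)
    (hgrow : ∀ i, 2 * (∑ j ∈ Finset.range (i + 1), p j) < p (i + 1))
    {I J K : Finset ℕ} (h : (∑ j ∈ I, p j) + ∑ j ∈ J, p j = ∑ j ∈ K, p j) :
    Disjoint I J ∧ K = I ∪ J := by
  classical
  set n := ((I ∪ J) ∪ K).sup id + 1 with hn
  have hsub : ∀ {S : Finset ℕ}, S ⊆ (I ∪ J) ∪ K → S ⊆ Finset.range n := by
    intro S hS j hj
    have := Finset.le_sup (f := id) (hS hj)
    simp only [Finset.mem_range, id] at *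
    omega
  have key := uniq_aux hpos hgrow n I J K
    (hsub (Finset.subset_union_left.trans Finset.subset_union_left))
    (hsub (Finset.subset_union_right.trans Finset.subset_union_left))
    (hsub Finset.subset_union_right) h
  constructor
  · rw [Finset.disjoint_left]
    intro a ha hb
    exact (key a).2 ⟨ha, hb⟩
  · ext a
    rw [Finset.mem_union]
    exact (key a).1

end SGAux

namespace SGAux

variable {p : ℕ → ℤ}

/-- representation with all indices of parity `r` -/
def RepP (p : ℕ → ℤ) (r : ℕ) (x : ℤ) : Prop :=
  ∃ I : Finset ℕ, I.Nonempty ∧ Gapd 2 I ∧ (∀ j ∈ I, j % 2 = r) ∧ x = ∑ j ∈ I, p j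

theorem mem_B (p : ℕ → ℤ) (r : ℕ) (hr : r < 2) (x : ℤ) :
    x ∈ SG 1 (fun i => p (2 * i + r)) ↔ RepP p r x := by
  rw [mem_SG_iff]
  constructor
  · rintro ⟨J, hJne, hJgap, rfl⟩
    refine ⟨J.image (fun j => 2 * j + r), hJne.image _, ?_, ?_, ?_⟩
    · rintro a ha ⟨b, hb, hab⟩
      simp only [Finset.mem_image] at ha hb
      obtain ⟨j, hj, rfl⟩ := ha
      obtain ⟨j', hj', rfl⟩ := hb
      obtain ⟨c, hcJ, hc1, hc2⟩ := hJgap j hj ⟨j', hj', by omega⟩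
      exact ⟨2 * c + r, Finset.mem_image_of_mem _ hcJ, by omega, by omega⟩
    · intro j hj
      simp only [Finset.mem_image] at hj
      obtain ⟨a, _, rfl⟩ := hj
      omega
    · exact (Finset.sum_image (fun x _ y _ h => by omega)).symm
  · rintro ⟨I, hIne, hIgap, hIr, rfl⟩
    refine ⟨I.image (fun i => i / 2), hIne.image _, ?_, ?_⟩
    · rintro a ha ⟨b, hb, hab⟩
      simp only [Finset.mem_image] at ha hb
      obtain ⟨i, hi, rfl⟩ := ha
      obtain ⟨i', hi', rfl⟩ := hb
      have hpi := hIr i hi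
      have hpi' := hIr i' hi'
      have hii' : i < i' := by omega
      obtain ⟨c, hcI, hc1, hc2⟩ := hIgap i hi ⟨i', hi', hii'⟩
      have hpc := hIr c hcI
      have hc3 : c = i + 2 := by omega
      refine ⟨c / 2, Finset.mem_image_of_mem _ hcI, by omega, by omega⟩
    · rw [Finset.sum_image (fun x hx y hy h => by
        have := hIr x hx; have := hIr y hy; omega)]
      apply Finset.sum_congr rfl
      intro i hi
      have := hIr i hi
      congr 1
      omega

/-- comparability of two disjoint same-parity gap-2 sets -/
theorem comp2 {A B : Finset ℕ} {r : ℕ} (hA : A.Nonempty) (hB : B.Nonempty)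
    (gA : Gapd 2 A) (gB : Gapd 2 B) (pA : ∀ j ∈ A, j % 2 = r) (pB : ∀ j ∈ B, j % 2 = r)
    (hd : Disjoint A B) : A.max' hA < B.min' hB ∨ B.max' hB < A.min' hA := by
  by_contra h
  push_neg at h
  obtain ⟨h1, h2⟩ := h
  rcases le_total (A.min' hA) (B.min' hB) with hm | hm
  · have : B.min' hB ∈ A :=
      parity_interval gA pA hA (pB _ (B.min'_mem hB)) hm h1
    exact Finset.disjoint_left.mp hd this (B.min'_mem hB)
  · have : A.min' hA ∈ B :=
      parity_interval gB pB hB (pA _ (A.min'_mem hA)) hm h2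
    exact Finset.disjoint_left.mp hd (A.min'_mem hA) this

theorem core_sorted {A B C : Finset ℕ} {r : ℕ} (hA : A.Nonempty) (hB : B.Nonempty)
    (hC : C.Nonempty) (pA : ∀ j ∈ A, j % 2 = r) (pB : ∀ j ∈ B, j % 2 = r)
    (pC : ∀ j ∈ C, j % 2 = r) (gAC : Gapd 2 (A ∪ C)) (dAB : Disjoint A B)
    (dBC : Disjoint B C) (o1 : A.max' hA < B.min' hB) (o2 : B.max' hB < C.min' hC) :
    False := by
  have hACne : (A ∪ C).Nonempty := hA.mono Finset.subset_union_left
  have pAC : ∀ j ∈ A ∪ C, j % 2 = r := by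
    intro j hj
    rcases Finset.mem_union.mp hj with h | h
    · exact pA j h
    · exact pC j h
  set m := B.min' hB with hm
  have hmin : (A ∪ C).min' hACne ≤ m := by
    have := (A ∪ C).min'_le _ (Finset.mem_union_left C (A.max'_mem hA))
    omega
  have hmax : m ≤ (A ∪ C).max' hACne := by
    have h1 : m ≤ B.max' hB := B.min'_le _ (B.max'_mem hB)
    have h2 := (A ∪ C).le_max' _ (Finset.mem_union_right A (C.min'_mem hC))
    omega
  have hmem : m ∈ A ∪ C :=
    parity_interval gAC pAC hACne (pB _ (B.min'_mem hB)) hmin hmax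
  rcases Finset.mem_union.mp hmem with h | h
  · exact Finset.disjoint_left.mp dAB h (B.min'_mem hB)
  · exact Finset.disjoint_left.mp dBC (B.min'_mem hB) h

theorem core0_sorted {A B C : Finset ℕ} {mA mB mC : ℕ}
    (hmA : mA ∈ A) (hmB : mB ∈ B) (hmB1 : mB + 1 ∈ B) (hmC : mC ∈ C)
    (gAC : Gapd 2 (A ∪ C)) (dAB : Disjoint A B) (dBC : Disjoint B C)
    (o1 : mA < mB) (o2 : mB < mC) : False := by
  have h1 : mC ≠ mB + 1 := fun h =>
    Finset.disjoint_left.mp dBC hmB1 (h ▸ hmC)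
  have h2 : mB + 1 < mC := by omega
  refine straddle gAC (Finset.mem_union_left C hmA) (Finset.mem_union_right A hmC) o1 h2 ?_ ?_
  · intro h
    rcases Finset.mem_union.mp h with h | h
    · exact Finset.disjoint_left.mp dAB h hmB
    · exact Finset.disjoint_left.mp dBC hmB h
  · intro h
    rcases Finset.mem_union.mp h with h | h
    · exact Finset.disjoint_left.mp dAB h hmB1
    · exact Finset.disjoint_left.mp dBC hmB1 h

end SGAux
namespace SGAux

variable {p : ℕ → ℤ}

/-- representation with gap-2 set containing a consecutive pair -/
def RepB0 (p : ℕ → ℤ) (x : ℤ) : Prop :=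
  ∃ I : Finset ℕ, I.Nonempty ∧ Gapd 2 I ∧ (∃ m, m ∈ I ∧ m + 1 ∈ I) ∧ x = ∑ j ∈ I, p j

theorem B0_rep (x : ℤ)
    (hx : x ∈ SG 2 p \ (SG 1 (fun i => p (2 * i)) ∪ SG 1 (fun i => p (2 * i + 1)))) :
    RepB0 p x := by
  obtain ⟨hx2, hxn⟩ := hx
  obtain ⟨I, hne, hg, hs⟩ := (mem_SG_iff 2 p x).mp hx2
  refine ⟨I, hne, hg, ?_, hs⟩
  by_contra hnp
  have hpar := no_pair_parity hg hne hnp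
  apply hxn
  rcases Nat.mod_two_eq_zero_or_one (I.min' hne) with h | h
  · exact Or.inl ((mem_B p 0 (by omega) x).mpr
      ⟨I, hne, hg, fun j hj => by rw [hpar j hj, h], hs⟩)
  · exact Or.inr ((mem_B p 1 (by omega) x).mpr
      ⟨I, hne, hg, fun j hj => by rw [hpar j hj, h], hs⟩)

theorem core_B0 (hpos : ∀ i, 0 < p i)
    (hgrow : ∀ i, 2 * (∑ j ∈ Finset.range (i + 1), p j) < p (i + 1))
    {x1 x2 x3 : ℤ} (h1 : RepB0 p x1) (h2 : RepB0 p x2) (h3 : RepB0 p x3)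
    (h12 : RepB0 p (x1 + x2)) (h23 : RepB0 p (x2 + x3)) (h13 : RepB0 p (x1 + x3)) :
    False := by
  obtain ⟨I1, hne1, hg1, ⟨m1, hm1, hm1'⟩, hs1⟩ := h1
  obtain ⟨I2, hne2, hg2, ⟨m2, hm2, hm2'⟩, hs2⟩ := h2
  obtain ⟨I3, hne3, hg3, ⟨m3, hm3, hm3'⟩, hs3⟩ := h3
  obtain ⟨K12, _, hgK12, _, hsK12⟩ := h12
  obtain ⟨K23, _, hgK23, _, hsK23⟩ := h23
  obtain ⟨K13, _, hgK13, _, hsK13⟩ := h13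
  obtain ⟨d12, hu12⟩ := uniq hpos hgrow (I := I1) (J := I2) (K := K12)
    (by rw [← hs1, ← hs2, ← hsK12])
  obtain ⟨d23, hu23⟩ := uniq hpos hgrow (I := I2) (J := I3) (K := K23)
    (by rw [← hs2, ← hs3, ← hsK23])
  obtain ⟨d13, hu13⟩ := uniq hpos hgrow (I := I1) (J := I3) (K := K13)
    (by rw [← hs1, ← hs3, ← hsK13])
  rw [hu12] at hgK12
  rw [hu23] at hgK23
  rw [hu13] at hgK13
  have ne12 : m1 ≠ m2 := fun h => Finset.disjoint_left.mp d12 hm1 (h ▸ hm2)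
  have ne13 : m1 ≠ m3 := fun h => Finset.disjoint_left.mp d13 hm1 (h ▸ hm3)
  have ne23 : m2 ≠ m3 := fun h => Finset.disjoint_left.mp d23 hm2 (h ▸ hm3)
  rcases Nat.lt_trichotomy m1 m2 with o12 | o | o21
  · rcases Nat.lt_trichotomy m2 m3 with o23 | o | o32
    · exact core0_sorted hm1 hm2 hm2' hm3 hgK13 d12 d23 o12 o23
    · exact absurd o ne23
    · rcases Nat.lt_trichotomy m1 m3 with o13 | o | o31
      · exact core0_sorted hm1 hm3 hm3' hm2 hgK12 d13 d23.symm o13 o32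
      · exact absurd o ne13
      · exact core0_sorted hm3 hm1 hm1' hm2
          (by rwa [Finset.union_comm] at hgK23) d13.symm d12 o31 o12
  · exact absurd o ne12
  · rcases Nat.lt_trichotomy m1 m3 with o13 | o | o31
    · exact core0_sorted hm2 hm1 hm1' hm3 hgK23 d12.symm d13 o21 o13
    · exact absurd o ne13
    · rcases Nat.lt_trichotomy m2 m3 with o23 | o | o32
      · exact core0_sorted hm2 hm3 hm3' hm1
          (by rwa [Finset.union_comm] at hgK12) d23 d13.symm o23 o31
      · exact absurd o ne23
      · exact core0_sorted hm3 hm2 hm2' hm1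
          (by rwa [Finset.union_comm] at hgK13) d23.symm d12.symm o32 o21

/-- mixed parity representation -/
def RepM (p : ℕ → ℤ) (x : ℤ) : Prop := ∃ r, r < 2 ∧ RepP p r x

theorem core_mixed (hpos : ∀ i, 0 < p i)
    (hgrow : ∀ i, 2 * (∑ j ∈ Finset.range (i + 1), p j) < p (i + 1))
    {x1 x2 x3 : ℤ} (h1 : RepM p x1) (h2 : RepM p x2) (h3 : RepM p x3)
    (h12 : RepM p (x1 + x2)) (h23 : RepM p (x2 + x3)) (h13 : RepM p (x1 + x3)) :
    False := by
  obtain ⟨r1, _, I1, hne1, hg1, hp1, hs1⟩ := h1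
  obtain ⟨r2, _, I2, hne2, hg2, hp2, hs2⟩ := h2
  obtain ⟨r3, _, I3, hne3, hg3, hp3, hs3⟩ := h3
  obtain ⟨r12, _, K12, hneK12, hgK12, hpK12, hsK12⟩ := h12
  obtain ⟨r23, _, K23, hneK23, hgK23, hpK23, hsK23⟩ := h23
  obtain ⟨r13, _, K13, hneK13, hgK13, hpK13, hsK13⟩ := h13
  obtain ⟨d12, hu12⟩ := uniq hpos hgrow (I := I1) (J := I2) (K := K12)
    (by rw [← hs1, ← hs2, ← hsK12])
  obtain ⟨d23, hu23⟩ := uniq hpos hgrow (I := I2) (J := I3) (K := K23)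
    (by rw [← hs2, ← hs3, ← hsK23])
  obtain ⟨d13, hu13⟩ := uniq hpos hgrow (I := I1) (J := I3) (K := K13)
    (by rw [← hs1, ← hs3, ← hsK13])
  rw [hu12] at hgK12 hpK12
  rw [hu23] at hgK23 hpK23
  rw [hu13] at hgK13 hpK13
  -- equalize parities
  obtain ⟨j1, hj1⟩ := id hne1
  obtain ⟨j2, hj2⟩ := id hne2
  obtain ⟨j3, hj3⟩ := id hne3
  have e1 : r1 = r12 := by
    rw [← hp1 j1 hj1, hpK12 j1 (Finset.mem_union_left _ hj1)]
  have e2 : r2 = r12 := by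
    rw [← hp2 j2 hj2, hpK12 j2 (Finset.mem_union_right _ hj2)]
  have e3 : r3 = r23 := by
    rw [← hp3 j3 hj3, hpK23 j3 (Finset.mem_union_right _ hj3)]
  have e2' : r2 = r23 := by
    rw [← hp2 j2 hj2, hpK23 j2 (Finset.mem_union_left _ hj2)]
  have hp2' : ∀ j ∈ I2, j % 2 = r1 := fun j hj => by rw [hp2 j hj]; omega
  have hp3' : ∀ j ∈ I3, j % 2 = r1 := fun j hj => by rw [hp3 j hj]; omega
  rcases comp2 hne1 hne2 hg1 hg2 hp1 hp2' d12 with c12 | c21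
  · rcases comp2 hne2 hne3 hg2 hg3 hp2' hp3' d23 with c23 | c32
    · exact core_sorted hne1 hne2 hne3 hp1 hp2' hp3' hgK13 d12 d23 c12 c23
    · rcases comp2 hne1 hne3 hg1 hg3 hp1 hp3' d13 with c13 | c31
      · exact core_sorted hne1 hne3 hne2 hp1 hp3' hp2' hgK12 d13 d23.symm c13 c32
      · exact core_sorted hne3 hne1 hne2 hp3' hp1 hp2'
          (by rwa [Finset.union_comm] at hgK23) d13.symm d12 c31 c12
  · rcases comp2 hne1 hne3 hg1 hg3 hp1 hp3' d13 with c13 | c31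
    · rcases comp2 hne2 hne3 hg2 hg3 hp2' hp3' d23 with c23 | c32
      · exact core_sorted hne2 hne1 hne3 hp2' hp1 hp3' hgK23 d12.symm d13 c21 c13
      · -- c21 : max2 < min1, c13 : max1 < min3, c32 : max3 < min2 : cycle
        have q1 := I1.min'_le _ (I1.max'_mem hne1)
        have q2 := I2.min'_le _ (I2.max'_mem hne2)
        have q3 := I3.min'_le _ (I3.max'_mem hne3)
        omega
    · rcases comp2 hne2 hne3 hg2 hg3 hp2' hp3' d23 with c23 | c32
      · exact core_sorted hne2 hne3 hne1 hp2' hp3' hp1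
          (by rwa [Finset.union_comm] at hgK12) d23 d13.symm c23 c31
      · exact core_sorted hne3 hne2 hne1 hp3' hp2' hp1
          (by rwa [Finset.union_comm] at hgK13) d23.symm d12.symm c32 c21
  -- note: the remaining cycle case in first branch
  
theorem single_mem (d : ℕ) (Q : ℕ → ℤ) (m : ℕ) : Q m ∈ SG d Q := by
  refine ⟨0, fun _ => m, ?_, ?_, ?_⟩
  · intro a b hab
    have ha := a.isLt
    have hb := b.isLt
    have := Fin.lt_iff_val_lt_val.mp hab
    omega
  · intro t
    exact t.elim0
  · simp

theorem pair_mem (d : ℕ) (Q : ℕ → ℤ) (m m' : ℕ) (h1 : m < m') (h2 : m' - m ≤ d) :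
    Q m + Q m' ∈ SG d Q := by
  classical
  refine ⟨1, fun t => if t = 0 then m else m', ?_, ?_, ?_⟩
  · intro a b hab
    have hab' := Fin.lt_iff_val_lt_val.mp hab
    have ha := a.isLt
    have hb := b.isLt
    have ha' : (a : ℕ) = 0 := by omega
    have hb' : (b : ℕ) = 1 := by omega
    have ha0 : a = 0 := by apply Fin.ext; simpa using ha'
    have hb1 : b = 1 := by apply Fin.ext; simpa using hb'
    subst ha0; subst hb1
    simp [h1]
  · intro t
    have ht : t = 0 := Subsingleton.elim t 0
    subst ht
    norm_num
    omega
  · rw [Fin.sum_univ_two]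
    norm_num

theorem sorted3 {B : Set ℤ}
    (noT : ¬ ∃ a₁ a₂ a₃ : ℤ, a₁ ≤ a₂ ∧ a₂ ≤ a₃ ∧ a₁ ∈ B ∧ a₂ ∈ B ∧ a₃ ∈ B ∧
        a₁ + a₂ ∈ B ∧ a₂ + a₃ ∈ B ∧ a₁ + a₃ ∈ B)
    {a b c : ℤ} (ha : a ∈ B) (hb : b ∈ B) (hc : c ∈ B)
    (hab : a + b ∈ B) (hbc : b + c ∈ B) (hac : a + c ∈ B) : False := by
  apply noT
  rcases le_total a b with h1 | h1 <;> rcases le_total b c with h2 | h2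
  · exact ⟨a, b, c, h1, h2, ha, hb, hc, hab, hbc, hac⟩
  · rcases le_total a c with h3 | h3
    · exact ⟨a, c, b, h3, h2, ha, hc, hb, hac, by rwa [add_comm], hab⟩
    · exact ⟨c, a, b, h3, h1, hc, ha, hb, by rwa [add_comm], hab, by rwa [add_comm]⟩
  · rcases le_total a c with h3 | h3
    · exact ⟨b, a, c, h1, h3, hb, ha, hc, by rwa [add_comm], hac, hbc⟩
    · exact ⟨b, c, a, h2, h3, hb, hc, ha, hbc, by rwa [add_comm], by rwa [add_comm]⟩
  · exact ⟨c, b, a, h2, h1, hc, hb, ha, by rwa [add_comm], by rwa [add_comm], by rwa [add_comm]⟩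

theorem noSG2_of_noTriple {B : Set ℤ}
    (noT : ¬ ∃ a₁ a₂ a₃ : ℤ, a₁ ≤ a₂ ∧ a₂ ≤ a₃ ∧ a₁ ∈ B ∧ a₂ ∈ B ∧ a₃ ∈ B ∧
        a₁ + a₂ ∈ B ∧ a₂ + a₃ ∈ B ∧ a₁ + a₃ ∈ B) :
    ¬ ∃ Q : ℕ → ℤ, SG 2 Q ⊆ B := by
  rintro ⟨Q, hQ⟩
  exact sorted3 noT (hQ (single_mem 2 Q 0)) (hQ (single_mem 2 Q 1)) (hQ (single_mem 2 Q 2))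
    (hQ (pair_mem 2 Q 0 1 (by omega) (by omega)))
    (hQ (pair_mem 2 Q 1 2 (by omega) (by omega)))
    (hQ (pair_mem 2 Q 0 2 (by omega) (by omega)))

end SGAux
namespace SGAux

variable {p : ℕ → ℤ}

theorem memM_of_union {x : ℤ}
    (hx : x ∈ SG 1 (fun i => p (2 * i)) ∪ SG 1 (fun i => p (2 * i + 1))) : RepM p x := by
  rcases hx with h | h
  · exact ⟨0, by omega, (mem_B p 0 (by omega) x).mp h⟩
  · exact ⟨1, by omega, (mem_B p 1 (by omega) x).mp h⟩

theorem noT_union (hpos : ∀ i, 0 < p i)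
    (hgrow : ∀ i, 2 * (∑ j ∈ Finset.range (i + 1), p j) < p (i + 1)) :
    ¬ ∃ a₁ a₂ a₃ : ℤ, a₁ ≤ a₂ ∧ a₂ ≤ a₃ ∧
      a₁ ∈ SG 1 (fun i => p (2 * i)) ∪ SG 1 (fun i => p (2 * i + 1)) ∧
      a₂ ∈ SG 1 (fun i => p (2 * i)) ∪ SG 1 (fun i => p (2 * i + 1)) ∧
      a₃ ∈ SG 1 (fun i => p (2 * i)) ∪ SG 1 (fun i => p (2 * i + 1)) ∧
      a₁ + a₂ ∈ SG 1 (fun i => p (2 * i)) ∪ SG 1 (fun i => p (2 * i + 1)) ∧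
      a₂ + a₃ ∈ SG 1 (fun i => p (2 * i)) ∪ SG 1 (fun i => p (2 * i + 1)) ∧
      a₁ + a₃ ∈ SG 1 (fun i => p (2 * i)) ∪ SG 1 (fun i => p (2 * i + 1)) := by
  rintro ⟨a1, a2, a3, _, _, m1, m2, m3, m12, m23, m13⟩
  exact core_mixed hpos hgrow (memM_of_union m1) (memM_of_union m2) (memM_of_union m3)
    (memM_of_union m12) (memM_of_union m23) (memM_of_union m13)

theorem noT_B0 (hpos : ∀ i, 0 < p i)
    (hgrow : ∀ i, 2 * (∑ j ∈ Finset.range (i + 1), p j) < p (i + 1)) :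
    ¬ ∃ a₁ a₂ a₃ : ℤ, a₁ ≤ a₂ ∧ a₂ ≤ a₃ ∧
      a₁ ∈ SG 2 p \ (SG 1 (fun i => p (2 * i)) ∪ SG 1 (fun i => p (2 * i + 1))) ∧
      a₂ ∈ SG 2 p \ (SG 1 (fun i => p (2 * i)) ∪ SG 1 (fun i => p (2 * i + 1))) ∧
      a₃ ∈ SG 2 p \ (SG 1 (fun i => p (2 * i)) ∪ SG 1 (fun i => p (2 * i + 1))) ∧
      a₁ + a₂ ∈ SG 2 p \ (SG 1 (fun i => p (2 * i)) ∪ SG 1 (fun i => p (2 * i + 1))) ∧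
      a₂ + a₃ ∈ SG 2 p \ (SG 1 (fun i => p (2 * i)) ∪ SG 1 (fun i => p (2 * i + 1))) ∧
      a₁ + a₃ ∈ SG 2 p \ (SG 1 (fun i => p (2 * i)) ∪ SG 1 (fun i => p (2 * i + 1))) := by
  rintro ⟨a1, a2, a3, _, _, m1, m2, m3, m12, m23, m13⟩
  exact core_B0 hpos hgrow (B0_rep a1 m1) (B0_rep a2 m2) (B0_rep a3 m3)
    (B0_rep _ m12) (B0_rep _ m23) (B0_rep _ m13)

theorem noT_mono {B B' : Set ℤ} (h : B ⊆ B')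
    (noT : ¬ ∃ a₁ a₂ a₃ : ℤ, a₁ ≤ a₂ ∧ a₂ ≤ a₃ ∧ a₁ ∈ B' ∧ a₂ ∈ B' ∧ a₃ ∈ B' ∧
        a₁ + a₂ ∈ B' ∧ a₂ + a₃ ∈ B' ∧ a₁ + a₃ ∈ B') :
    ¬ ∃ a₁ a₂ a₃ : ℤ, a₁ ≤ a₂ ∧ a₂ ≤ a₃ ∧ a₁ ∈ B ∧ a₂ ∈ B ∧ a₃ ∈ B ∧
        a₁ + a₂ ∈ B ∧ a₂ + a₃ ∈ B ∧ a₁ + a₃ ∈ B := by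
  rintro ⟨a1, a2, a3, l1, l2, x1, x2, x3, x12, x23, x13⟩
  exact noT ⟨a1, a2, a3, l1, l2, h x1, h x2, h x3, h x12, h x23, h x13⟩

theorem B_subset (r : ℕ) (hr : r < 2) : SG 1 (fun i => p (2 * i + r)) ⊆ SG 2 p := by
  intro x hx
  obtain ⟨I, hne, hg, _, hs⟩ := (mem_B p r hr x).mp hx
  exact (mem_SG_iff 2 p x).mpr ⟨I, hne, hg, hs⟩

end SGAux


/-- `F_{SG₂}` does not have the Ramsey property. -/
theorem statement15 (p : ℕ → ℤ) (hpos : ∀ i, 0 < p i)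
    (hgrow : ∀ i, 2 * (∑ j ∈ Finset.range (i + 1), p j) < p (i + 1)) :
    (∀ B : Set ℤ,
        (B = SG 2 p \ (SG 1 (fun i => p (2 * i)) ∪ SG 1 (fun i => p (2 * i + 1)))
          ∨ B = SG 1 (fun i => p (2 * i)) ∨ B = SG 1 (fun i => p (2 * i + 1))) →
        (¬ ∃ a₁ a₂ a₃ : ℤ, a₁ ≤ a₂ ∧ a₂ ≤ a₃ ∧ a₁ ∈ B ∧ a₂ ∈ B ∧ a₃ ∈ B ∧
            a₁ + a₂ ∈ B ∧ a₂ + a₃ ∈ B ∧ a₁ + a₃ ∈ B) ∧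
        ¬ ∃ Q : ℕ → ℤ, SG 2 Q ⊆ B) ∧
    ¬ (∀ A A₁ A₂ : Set ℤ, (∃ Q : ℕ → ℤ, SG 2 Q ⊆ A) → A = A₁ ∪ A₂ →
        (∃ Q : ℕ → ℤ, SG 2 Q ⊆ A₁) ∨ (∃ Q : ℕ → ℤ, SG 2 Q ⊆ A₂)) := by
  constructor
  · rintro B hB
    have noT : ¬ ∃ a₁ a₂ a₃ : ℤ, a₁ ≤ a₂ ∧ a₂ ≤ a₃ ∧ a₁ ∈ B ∧ a₂ ∈ B ∧ a₃ ∈ B ∧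
        a₁ + a₂ ∈ B ∧ a₂ + a₃ ∈ B ∧ a₁ + a₃ ∈ B := by
      rcases hB with rfl | rfl | rfl
      · exact SGAux.noT_B0 hpos hgrow
      · exact SGAux.noT_mono Set.subset_union_left (SGAux.noT_union hpos hgrow)
      · exact SGAux.noT_mono Set.subset_union_right (SGAux.noT_union hpos hgrow)
    exact ⟨noT, SGAux.noSG2_of_noTriple noT⟩
  · intro H
    have hsub : SG 1 (fun i => p (2 * i)) ∪ SG 1 (fun i => p (2 * i + 1)) ⊆ SG 2 p :=
      Set.union_subset (SGAux.B_subset 0 (by omega)) (SGAux.B_subset 1 (by omega))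
    rcases H (SG 2 p) _ _ ⟨p, subset_rfl⟩ (Set.union_diff_cancel hsub).symm with h | h
    · exact SGAux.noSG2_of_noTriple (SGAux.noT_union hpos hgrow) h
    · exact SGAux.noSG2_of_noTriple (SGAux.noT_B0 hpos hgrow) h
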